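/- arXiv:1903.01835 — 6 statements merged into one kernel-verified Lean document; each statement's English description precedes it below -/
import Mathlib

section
/- Let k > 0 and let φ be a function holomorphic on a neighborhood of [-1,1] in ℂ that verifies the E(k) property with threshold τ_φ. Then for every A ∈ (0, τ_φ) there exists B ∈ (0, A) such that φ([-1,1]_{k,B,p+1}) ⊆ [-1,1]_{k,B,p} for every integer p ≥ 1; one may take B = A (2 N(A))^{-1/k}, where N(A) is the integer furnished by the E(k) property for A. -/
open Set

/-- The segment `[-1,1]` viewed as a subset of `ℂ`. -/
noncomputable def seg : Set ℂ := Complex.ofReal '' Icc (-1:ℝ) 1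

/-- The neighborhood `[-1,1]_{k,A,n} = {z ∈ ℂ : dist(z,[-1,1]) < A n^{-1/k}}`. -/
noncomputable def nbhd (k A : ℝ) (n : ℕ) : Set ℂ :=
  {z : ℂ | Metric.infDist z seg < A * (n:ℝ) ^ (-(1:ℝ)/k)}

lemma nbhd_mono (k A : ℝ) (hk : 0 < k) (hA : 0 ≤ A) {n m : ℕ} (hn : 1 ≤ n)
    (hnm : n ≤ m) : nbhd k A m ⊆ nbhd k A n := by
  intro z hz
  simp only [nbhd, Set.mem_setOf_eq] at *
  refine hz.trans_le (mul_le_mul_of_nonneg_left ?_ hA)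
  apply Real.rpow_le_rpow_of_nonpos
  · exact_mod_cast hn
  · exact_mod_cast hnm
  · rw [neg_div]
    exact neg_nonpos.mpr (by positivity)

lemma nbhd_eq (k A : ℝ) (hA : 0 ≤ A) (N n : ℕ) :
    nbhd k (A * ((N:ℕ) : ℝ) ^ (-(1:ℝ)/k)) n = nbhd k A (N*n) := by
  ext z
  simp only [nbhd, Set.mem_setOf_eq]
  rw [mul_assoc, ← Real.mul_rpow (by positivity) (by positivity), ← Nat.cast_mul]

/-- If `φ` is holomorphic on a neighborhood of `[-1,1]` and verifies the `E(k)` property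
with threshold `τ`, then for every `A ∈ (0,τ)` there exists `B ∈ (0,A)` such that
`φ([-1,1]_{k,B,p+1}) ⊆ [-1,1]_{k,B,p}` for every integer `p ≥ 1`; moreover one may take
`B = A (2 N(A))^{-1/k}` where `N(A)` is any integer furnished by the `E(k)` property
for `A`. -/
theorem stmt3 (k : ℝ) (hk : 0 < k) (φ : ℂ → ℂ)
    (hol : ∃ U : Set ℂ, IsOpen U ∧ seg ⊆ U ∧ DifferentiableOn ℂ φ U)
    (τ : ℝ) (hτ : 0 < τ)
    (hE : ∀ A ∈ Set.Ioc (0:ℝ) τ, ∃ N : ℕ, 1 ≤ N ∧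
      ∀ p : ℕ, N ≤ p → φ '' nbhd k A (p+1) ⊆ nbhd k A p) :
    ∀ A ∈ Set.Ioo (0:ℝ) τ,
      (∃ B : ℝ, 0 < B ∧ B < A ∧
        ∀ p : ℕ, 1 ≤ p → φ '' nbhd k B (p+1) ⊆ nbhd k B p) ∧
      (∀ N : ℕ, 1 ≤ N → (∀ p : ℕ, N ≤ p → φ '' nbhd k A (p+1) ⊆ nbhd k A p) →
        0 < A * ((2*N : ℕ) : ℝ) ^ (-(1:ℝ)/k) ∧
        A * ((2*N : ℕ) : ℝ) ^ (-(1:ℝ)/k) < A ∧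
        ∀ p : ℕ, 1 ≤ p →
          φ '' nbhd k (A * ((2*N : ℕ) : ℝ) ^ (-(1:ℝ)/k)) (p+1)
            ⊆ nbhd k (A * ((2*N : ℕ) : ℝ) ^ (-(1:ℝ)/k)) p) := by
  intro A hA
  have hA0 : 0 < A := hA.1
  have key : ∀ N : ℕ, 1 ≤ N → (∀ p : ℕ, N ≤ p → φ '' nbhd k A (p+1) ⊆ nbhd k A p) →
      0 < A * ((2*N : ℕ) : ℝ) ^ (-(1:ℝ)/k) ∧
      A * ((2*N : ℕ) : ℝ) ^ (-(1:ℝ)/k) < A ∧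
      ∀ p : ℕ, 1 ≤ p →
        φ '' nbhd k (A * ((2*N : ℕ) : ℝ) ^ (-(1:ℝ)/k)) (p+1)
          ⊆ nbhd k (A * ((2*N : ℕ) : ℝ) ^ (-(1:ℝ)/k)) p := by
    intro N hN1 hNp
    have h2N : (1:ℝ) < ((2*N : ℕ) : ℝ) := by
      have : 2 ≤ 2*N := by omega
      exact_mod_cast this
    have hpow0 : (0:ℝ) < ((2*N : ℕ) : ℝ) ^ (-(1:ℝ)/k) :=
      Real.rpow_pos_of_pos (by linarith) _
    have hpow1 : ((2*N : ℕ) : ℝ) ^ (-(1:ℝ)/k) < 1 := by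
      have : -(1:ℝ)/k < 0 := by
        rw [neg_div]
        exact neg_neg_iff_pos.mpr (by positivity)
      calc ((2*N : ℕ) : ℝ) ^ (-(1:ℝ)/k) < ((2*N : ℕ) : ℝ) ^ (0:ℝ) :=
            Real.rpow_lt_rpow_of_exponent_lt h2N this
        _ = 1 := Real.rpow_zero _
    refine ⟨by positivity, ?_, ?_⟩
    · nlinarith
    · intro p hp
      rw [nbhd_eq k A hA0.le, nbhd_eq k A hA0.le]
      have h1 : nbhd k A (2*N*(p+1)) ⊆ nbhd k A (2*N*p+1) :=
        nbhd_mono k A hk hA0.le (by omega) (by nlinarith)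
      have h2 : φ '' nbhd k A (2*N*p+1) ⊆ nbhd k A (2*N*p) :=
        hNp (2*N*p) (by nlinarith)
      exact (Set.image_mono (f := φ) h1).trans h2
  refine ⟨?_, key⟩
  obtain ⟨N, hN1, hNp⟩ := hE A ⟨hA0, hA.2.le⟩
  obtain ⟨h1, h2, h3⟩ := key N hN1 hNp
  exact ⟨_, h1, h2, h3⟩
end

section
/- Let a, b : [-1,1] → ℝ be continuous, let P(x) = Σ_{j=0}^{N₀} a_j x^j be a polynomial with real coefficients of degree N₀ ≥ 2, and let c ∈ ℝ. Assume ‖a‖₁ > 0, ‖a‖₁ · P̲′(0) < 1, and 0 < ‖b + P(0)a‖₁ + |c| < θ(P,a) − P̲(θ(P,a))/P̲′(θ(P,a)). Then the equation r = ‖a‖₁ P̲(r) + ‖b + P(0)a‖₁ + |c| has exactly two roots r₀ < r₁ in [0, +∞), and these satisfy 0 < r₀ < θ(P,a) < r₁. Moreover the function H(r) = ‖a‖₁ P̲(r) + ‖b + P(0)a‖₁ + |c| − r is strictly decreasing on [0, θ(P,a)] and strictly increasing on [θ(P,a), +∞). -/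
open Set

/-- The L¹ norm of a function on `[-1,1]`: `‖g‖₁ = ∫_{-1}^{1} |g(t)| dt`. -/
noncomputable def norm1 (g : ℝ → ℝ) : ℝ := ∫ t in (-1:ℝ)..1, |g t|

/-- The polynomial `P(x) = Σ_{j=0}^{N₀} a_j x^j`. -/
noncomputable def Pfun (co : ℕ → ℝ) (N₀ : ℕ) : ℝ → ℝ :=
  fun x => ∑ j ∈ Finset.range (N₀+1), co j * x ^ j

/-- The associated polynomial `P̲(x) = Σ_{j=1}^{N₀} |a_j| x^j`. -/
noncomputable def Pbar (co : ℕ → ℝ) (N₀ : ℕ) : ℝ → ℝ :=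
  fun x => ∑ j ∈ Finset.Icc 1 N₀, |co j| * x ^ j

/-- Derivative of `Pbar`. -/
noncomputable def Dbar (co : ℕ → ℝ) (N₀ : ℕ) : ℝ → ℝ :=
  fun x => ∑ j ∈ Finset.Icc 1 N₀, |co j| * ((j : ℝ) * x ^ (j - 1))

lemma pbar_hasDerivAt (co : ℕ → ℝ) (N₀ : ℕ) (r : ℝ) :
    HasDerivAt (Pbar co N₀) (Dbar co N₀ r) r := by
  unfold Pbar Dbar
  apply HasDerivAt.fun_sum
  intro j _
  exact (hasDerivAt_pow j r).const_mul _

lemma dbar_strictMonoOn (co : ℕ → ℝ) (N₀ : ℕ) (hN₀ : 2 ≤ N₀) (hlead : co N₀ ≠ 0) :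
    StrictMonoOn (Dbar co N₀) (Ici (0:ℝ)) := by
  intro x hx y hy hxy
  unfold Dbar
  apply Finset.sum_lt_sum
  · intro j _
    have h1 : x ^ (j - 1) ≤ y ^ (j - 1) := pow_le_pow_left₀ hx hxy.le _
    have h2 : (0:ℝ) ≤ |co j| * (j : ℝ) := by positivity
    calc |co j| * ((j:ℝ) * x ^ (j-1)) = |co j| * (j:ℝ) * x ^ (j-1) := by ring
    _ ≤ |co j| * (j:ℝ) * y ^ (j-1) := by exact mul_le_mul_of_nonneg_left h1 h2
    _ = |co j| * ((j:ℝ) * y ^ (j-1)) := by ring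
  · refine ⟨N₀, Finset.mem_Icc.mpr ⟨le_trans (by norm_num) hN₀, le_refl _⟩, ?_⟩
    have h1 : x ^ (N₀ - 1) < y ^ (N₀ - 1) := by
      apply pow_lt_pow_left₀ hxy hx
      omega
    have h2 : (0:ℝ) < |co N₀| * (N₀ : ℝ) := by
      apply mul_pos (abs_pos.mpr hlead)
      exact_mod_cast Nat.cast_pos.mpr (by omega)
    calc |co N₀| * ((N₀:ℝ) * x ^ (N₀-1)) = |co N₀| * (N₀:ℝ) * x ^ (N₀-1) := by ring
    _ < |co N₀| * (N₀:ℝ) * y ^ (N₀-1) := by exact mul_lt_mul_of_pos_left h1 h2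
    _ = |co N₀| * ((N₀:ℝ) * y ^ (N₀-1)) := by ring

/-- Under conditions (1) and (2) of the paper, the equation
`r = ‖a‖₁ P̲(r) + ‖b + P(0)a‖₁ + |c|` has exactly two nonnegative roots `r₀ < r₁`, which
satisfy `0 < r₀ < θ(P,a) < r₁`; moreover `H(r) = ‖a‖₁ P̲(r) + ‖b + P(0)a‖₁ + |c| − r` is
strictly decreasing on `[0, θ(P,a)]` and strictly increasing on `[θ(P,a), ∞)`. -/
theorem stmt4 (a b : ℝ → ℝ)
    (ha : ContinuousOn a (Icc (-1:ℝ) 1)) (hb : ContinuousOn b (Icc (-1:ℝ) 1))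
    (N₀ : ℕ) (hN₀ : 2 ≤ N₀) (co : ℕ → ℝ) (hlead : co N₀ ≠ 0) (c : ℝ)
    (ha1 : 0 < norm1 a)
    (hsmall : norm1 a * deriv (Pbar co N₀) 0 < 1)
    (θ : ℝ) (hθpos : 0 < θ) (hθ : norm1 a * deriv (Pbar co N₀) θ = 1)
    (hcond1 : 0 < norm1 (fun t => b t + Pfun co N₀ 0 * a t) + |c|)
    (hcond2 : norm1 (fun t => b t + Pfun co N₀ 0 * a t) + |c|
      < θ - Pbar co N₀ θ / deriv (Pbar co N₀) θ)
    (H : ℝ → ℝ)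
    (hH : ∀ r, H r = norm1 a * Pbar co N₀ r
      + norm1 (fun t => b t + Pfun co N₀ 0 * a t) + |c| - r) :
    (∃ r₀ r₁ : ℝ, 0 < r₀ ∧ r₀ < θ ∧ θ < r₁ ∧ H r₀ = 0 ∧ H r₁ = 0 ∧
      ∀ r : ℝ, 0 ≤ r → H r = 0 → r = r₀ ∨ r = r₁) ∧
    StrictAntiOn H (Icc 0 θ) ∧ StrictMonoOn H (Ici θ) := by
  set A := norm1 a with hA
  set K := norm1 (fun t => b t + Pfun co N₀ 0 * a t) + |c| with hK
  set D := Dbar co N₀ with hD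
  have hderivP : ∀ r, deriv (Pbar co N₀) r = D r := fun r => (pbar_hasDerivAt co N₀ r).deriv
  have hmono := dbar_strictMonoOn co N₀ hN₀ hlead
  -- derivative of H
  have hHd : ∀ r, HasDerivAt H (A * D r - 1) r := by
    intro r
    have h1 : HasDerivAt (fun r => A * Pbar co N₀ r
        + norm1 (fun t => b t + Pfun co N₀ 0 * a t) + |c| - r) (A * D r - 1) r := by
      have := (((pbar_hasDerivAt co N₀ r).const_mul A).add_const
        (norm1 (fun t => b t + Pfun co N₀ 0 * a t))).add_const |c|
      simpa using this.fun_sub (hasDerivAt_id' r)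
    have hfun : H = fun r => A * Pbar co N₀ r
        + norm1 (fun t => b t + Pfun co N₀ 0 * a t) + |c| - r := funext hH
    rw [hfun]; exact h1
  have hHcont : Continuous H := by
    rw [continuous_iff_continuousAt]
    exact fun x => (hHd x).differentiableAt.continuousAt
  have hDθ : A * D θ = 1 := by rw [← hderivP]; exact hθ
  have hDθpos : 0 < D θ := by
    by_contra h
    push_neg at h
    nlinarith
  -- monotonicity parts
  have hanti : StrictAntiOn H (Icc 0 θ) := by
    apply strictAntiOn_of_deriv_neg (convex_Icc 0 θ) hHcont.continuousOn
    intro x hx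
    rw [interior_Icc] at hx
    rw [(hHd x).deriv]
    have : D x < D θ := hmono hx.1.le (le_of_lt hθpos) hx.2
    nlinarith
  have hmonoH : StrictMonoOn H (Ici θ) := by
    apply strictMonoOn_of_deriv_pos (convex_Ici θ) hHcont.continuousOn
    intro x hx
    rw [interior_Ici] at hx
    rw [(hHd x).deriv]
    have : D θ < D x := hmono (le_of_lt hθpos) (le_of_lt (lt_trans hθpos hx)) hx
    nlinarith
  refine ⟨?_, hanti, hmonoH⟩
  -- H 0 = K > 0
  have hPbar0 : Pbar co N₀ 0 = 0 := by
    unfold Pbar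
    apply Finset.sum_eq_zero
    intro j hj
    rw [Finset.mem_Icc] at hj
    rw [zero_pow (by omega : j ≠ 0), mul_zero]
  have hH0 : H 0 = K := by rw [hH]; rw [hPbar0]; ring
  have hH0pos : 0 < H 0 := by rw [hH0]; exact hcond1
  -- H θ < 0
  have hAPθ : A * Pbar co N₀ θ = Pbar co N₀ θ / D θ := by
    rw [eq_div_iff (ne_of_gt hDθpos)]
    linear_combination Pbar co N₀ θ * hDθ
  have hHθneg : H θ < 0 := by
    rw [hH]
    rw [hderivP] at hcond2
    have : A * Pbar co N₀ θ + K - θ < 0 := by rw [hAPθ]; linarith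
    linarith [this]
  -- existence of r₀ by IVT on [0, θ]
  have hivt0 : (0:ℝ) ∈ Icc (H θ) (H 0) := ⟨hHθneg.le, hH0pos.le⟩
  obtain ⟨r₀, hr₀mem, hr₀⟩ := intermediate_value_Icc' hθpos.le hHcont.continuousOn hivt0
  have hr₀pos : 0 < r₀ := by
    rcases eq_or_lt_of_le hr₀mem.1 with h | h
    · exfalso; rw [← h] at hr₀; linarith
    · exact h
  have hr₀ltθ : r₀ < θ := by
    rcases eq_or_lt_of_le hr₀mem.2 with h | h
    · exfalso; rw [h] at hr₀; linarith
    · exact h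
  -- big R with H R > 0
  have hcN : 0 < |co N₀| := abs_pos.mpr hlead
  set R : ℝ := max (θ + 1) (1 / (A * |co N₀|) + 1) with hR
  have hRθ : θ + 1 ≤ R := le_max_left _ _
  have hR1 : 1 < R := by linarith [hRθ]
  have hRbig : 1 / (A * |co N₀|) < R := by
    have := le_max_right (θ + 1) (1 / (A * |co N₀|) + 1)
    linarith
  have hAc : 0 < A * |co N₀| := mul_pos ha1 hcN
  have hARc : 1 < A * |co N₀| * R := by
    rw [div_lt_iff₀ hAc] at hRbig
    nlinarith
  have hPbarR : |co N₀| * R ^ N₀ ≤ Pbar co N₀ R := by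
    unfold Pbar
    apply Finset.single_le_sum (f := fun j => |co j| * R ^ j)
    · intro i _
      have : (0:ℝ) ≤ R := by linarith
      positivity
    · exact Finset.mem_Icc.mpr ⟨le_trans (by norm_num) hN₀, le_refl _⟩
  have hpow : R ^ 2 ≤ R ^ N₀ := pow_le_pow_right₀ hR1.le hN₀
  have hHRpos : 0 < H R := by
    have hRpos : (0:ℝ) < R := by linarith
    have hstep1 : |co N₀| * R ^ 2 ≤ |co N₀| * R ^ N₀ :=
      mul_le_mul_of_nonneg_left hpow hcN.le
    have hstep2 : A * (|co N₀| * R ^ 2) ≤ A * Pbar co N₀ R :=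
      mul_le_mul_of_nonneg_left (le_trans hstep1 hPbarR) ha1.le
    have hstep3 : R < A * (|co N₀| * R ^ 2) := by
      have := mul_lt_mul_of_pos_right hARc hRpos
      nlinarith [this]
    rw [hH]
    linarith
  have hθR : θ ≤ R := by linarith
  have hivt1 : (0:ℝ) ∈ Icc (H θ) (H R) := ⟨hHθneg.le, hHRpos.le⟩
  obtain ⟨r₁, hr₁mem, hr₁⟩ := intermediate_value_Icc hθR hHcont.continuousOn hivt1
  have hr₁gtθ : θ < r₁ := by
    rcases eq_or_lt_of_le hr₁mem.1 with h | h
    · exfalso; rw [← h] at hr₁; linarith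
    · exact h
  refine ⟨r₀, r₁, hr₀pos, hr₀ltθ, hr₁gtθ, hr₀, hr₁, ?_⟩
  intro r hr hHr
  by_cases hrθ : r ≤ θ
  · left
    exact hanti.injOn ⟨hr, hrθ⟩ ⟨hr₀pos.le, hr₀ltθ.le⟩ (by rw [hHr, hr₀])
  · right
    push_neg at hrθ
    exact hmonoH.injOn (le_of_lt hrθ) (le_of_lt hr₁gtθ) (by rw [hHr, hr₁])
end

section
/- Let a, b : [-1,1] → ℝ be continuous, ψ : [-1,1] → [-1,1] continuous, P(x) = Σ_{j=0}^{N₀} a_j x^j a polynomial with real coefficients of degree N₀ ≥ 2, d ∈ [-1,1] and c ∈ ℝ. Suppose r₀ ≥ 0 satisfies r₀ = ‖a‖₁ P̲(r₀) + ‖b + P(0)a‖₁ + |c|. Then for every continuous f : [-1,1] → ℝ with ‖f‖_{∞,[-1,1]} ≤ r₀, the function T(f) defined by T(f)(x) := ∫_d^x a(t) P(f(ψ(t))) dt + ∫_d^x b(t) dt + c satisfies ‖T(f)‖_{∞,[-1,1]} ≤ r₀; that is, the closed ball of radius r₀ centered at 0 in (C⁰([-1,1]), ‖·‖_∞) is stable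 under T. -/
open Set

lemma range_eq_insert (N₀ : ℕ) : Finset.range (N₀+1) = insert 0 (Finset.Icc 1 N₀) := by
  ext j; simp [Finset.mem_range, Finset.mem_Icc]; omega

lemma Pfun_zero (co : ℕ → ℝ) (N₀ : ℕ) : Pfun co N₀ 0 = co 0 := by
  rw [Pfun, range_eq_insert N₀, Finset.sum_insert (by simp)]
  rw [Finset.sum_eq_zero (fun j hj => by
    rw [zero_pow (by simp [Finset.mem_Icc] at hj; omega), mul_zero])]
  simp

lemma Pfun_sub (co : ℕ → ℝ) (N₀ : ℕ) (y : ℝ) :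
    Pfun co N₀ y - Pfun co N₀ 0 = ∑ j ∈ Finset.Icc 1 N₀, co j * y ^ j := by
  rw [Pfun_zero]
  simp only [Pfun, range_eq_insert N₀]
  rw [Finset.sum_insert (by simp)]
  ring_nf

lemma key_bound (co : ℕ → ℝ) (N₀ : ℕ) (r₀ : ℝ) (hr₀ : 0 ≤ r₀) (y : ℝ) (hy : |y| ≤ r₀) :
    |Pfun co N₀ y - Pfun co N₀ 0| ≤ Pbar co N₀ r₀ := by
  rw [Pfun_sub]
  calc |∑ j ∈ Finset.Icc 1 N₀, co j * y ^ j| ≤ ∑ j ∈ Finset.Icc 1 N₀, |co j * y ^ j| :=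
        Finset.abs_sum_le_sum_abs _ _
    _ ≤ Pbar co N₀ r₀ := by
        apply Finset.sum_le_sum
        intro j _
        rw [abs_mul, abs_pow]
        exact mul_le_mul_of_nonneg_left (pow_le_pow_left₀ (abs_nonneg y) hy j) (abs_nonneg _)

lemma Pbar_nonneg (co : ℕ → ℝ) (N₀ : ℕ) (r₀ : ℝ) (hr₀ : 0 ≤ r₀) : 0 ≤ Pbar co N₀ r₀ :=
  Finset.sum_nonneg fun j _ => mul_nonneg (abs_nonneg _) (pow_nonneg hr₀ j)

lemma abs_int_le (g : ℝ → ℝ) (hg : ContinuousOn g (Icc (-1:ℝ) 1))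
    (d x : ℝ) (hd : d ∈ Icc (-1:ℝ) 1) (hx : x ∈ Icc (-1:ℝ) 1) :
    |∫ t in d..x, g t| ≤ ∫ t in (-1:ℝ)..1, |g t| := by
  have hgi : IntervalIntegrable (fun t => |g t|) MeasureTheory.volume (-1) 1 :=
    (hg.abs.mono (by rw [uIcc_of_le (by norm_num)])).intervalIntegrable
  have h1 : |∫ t in d..x, g t| ≤ |∫ t in d..x, (|g t|)| := by
    simpa [Real.norm_eq_abs] using intervalIntegral.norm_integral_le_abs_integral_norm
      (f := g) (a := d) (b := x) (μ := MeasureTheory.volume)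
  have h2 : |∫ t in d..x, (|g t|)| ≤ |∫ t in (-1:ℝ)..1, (|g t|)| := by
    apply intervalIntegral.abs_integral_mono_interval
    · apply uIoc_subset_uIoc_of_uIcc_subset_uIcc
      rw [uIcc_of_le (by norm_num : (-1:ℝ) ≤ 1)]
      exact uIcc_subset_Icc hd hx
    · exact MeasureTheory.ae_of_all _ fun t => abs_nonneg _
    · exact hgi
  have h3 : |∫ t in (-1:ℝ)..1, (|g t|)| = ∫ t in (-1:ℝ)..1, |g t| :=
    abs_of_nonneg (intervalIntegral.integral_nonneg (by norm_num) fun u _ => abs_nonneg _)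
  linarith

/-- If `r₀ ≥ 0` satisfies `r₀ = ‖a‖₁ P̲(r₀) + ‖b + P(0)a‖₁ + |c|`, then the closed ball
of radius `r₀` in `(C⁰([-1,1]), ‖·‖_∞)` is stable under the operator
`T(f)(x) = ∫_d^x a(t) P(f(ψ(t))) dt + ∫_d^x b(t) dt + c`. -/
theorem stmt5 (a b ψ : ℝ → ℝ)
    (ha : ContinuousOn a (Icc (-1:ℝ) 1)) (hb : ContinuousOn b (Icc (-1:ℝ) 1))
    (hψ : ContinuousOn ψ (Icc (-1:ℝ) 1))
    (hψmap : MapsTo ψ (Icc (-1:ℝ) 1) (Icc (-1:ℝ) 1))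
    (N₀ : ℕ) (hN₀ : 2 ≤ N₀) (co : ℕ → ℝ) (hlead : co N₀ ≠ 0)
    (d : ℝ) (hd : d ∈ Icc (-1:ℝ) 1) (c : ℝ)
    (r₀ : ℝ) (hr₀ : 0 ≤ r₀)
    (hroot : r₀ = norm1 a * Pbar co N₀ r₀
      + norm1 (fun t => b t + Pfun co N₀ 0 * a t) + |c|)
    (f : ℝ → ℝ) (hf : ContinuousOn f (Icc (-1:ℝ) 1))
    (hfb : ∀ x ∈ Icc (-1:ℝ) 1, |f x| ≤ r₀) :
    ∀ x ∈ Icc (-1:ℝ) 1,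
      |(∫ t in d..x, a t * Pfun co N₀ (f (ψ t))) + (∫ t in d..x, b t) + c| ≤ r₀ := by
  intro x hx
  set g : ℝ → ℝ := fun t => a t * (Pfun co N₀ (f (ψ t)) - Pfun co N₀ 0) with hgdef
  set h : ℝ → ℝ := fun t => b t + Pfun co N₀ 0 * a t with hhdef
  -- continuity
  have hPc : Continuous (Pfun co N₀) := by
    apply continuous_finset_sum
    intro j _
    exact (continuous_const.mul (continuous_pow j))
  have hfψ : ContinuousOn (fun t => Pfun co N₀ (f (ψ t))) (Icc (-1:ℝ) 1) :=
    hPc.comp_continuousOn ((hf.comp hψ hψmap))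
  have hgc : ContinuousOn g (Icc (-1:ℝ) 1) := ha.mul (hfψ.sub continuousOn_const)
  have hhc : ContinuousOn h (Icc (-1:ℝ) 1) := hb.add (continuousOn_const.mul ha)
  have hsub : uIcc d x ⊆ Icc (-1:ℝ) 1 := uIcc_subset_Icc hd hx
  have hgi : IntervalIntegrable g MeasureTheory.volume d x :=
    (hgc.mono hsub).intervalIntegrable
  have hhi : IntervalIntegrable h MeasureTheory.volume d x :=
    (hhc.mono hsub).intervalIntegrable
  -- rewrite sum of integrals
  have hbint : IntervalIntegrable b MeasureTheory.volume d x :=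
    (hb.mono hsub).intervalIntegrable
  have haPint : IntervalIntegrable (fun t => a t * Pfun co N₀ (f (ψ t)))
      MeasureTheory.volume d x := ((ha.mul hfψ).mono hsub).intervalIntegrable
  have heq : (∫ t in d..x, a t * Pfun co N₀ (f (ψ t))) + (∫ t in d..x, b t)
      = (∫ t in d..x, g t) + (∫ t in d..x, h t) := by
    rw [← intervalIntegral.integral_add haPint hbint,
        ← intervalIntegral.integral_add hgi hhi]
    congr 1
    ext t
    simp only [hgdef, hhdef]
    ring
  rw [heq]
  -- bound each piece
  have hg1 : |∫ t in d..x, g t| ≤ ∫ t in (-1:ℝ)..1, |g t| := abs_int_le g hgc d x hd hx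
  have hg2 : (∫ t in (-1:ℝ)..1, |g t|) ≤ norm1 a * Pbar co N₀ r₀ := by
    have : (∫ t in (-1:ℝ)..1, |g t|) ≤ ∫ t in (-1:ℝ)..1, |a t| * Pbar co N₀ r₀ := by
      apply intervalIntegral.integral_mono_on (by norm_num)
      · exact (hgc.abs.mono (by rw [uIcc_of_le (by norm_num)])).intervalIntegrable
      · exact ((ha.abs.mul continuousOn_const).mono
          (by rw [uIcc_of_le (by norm_num)])).intervalIntegrable
      · intro t ht
        rw [hgdef, abs_mul]
        exact mul_le_mul_of_nonneg_left
          (key_bound co N₀ r₀ hr₀ _ (hfb _ (hψmap ht))) (abs_nonneg _)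
    rwa [intervalIntegral.integral_mul_const, ← norm1] at this
  have hh1 : |∫ t in d..x, h t| ≤ norm1 h := abs_int_le h hhc d x hd hx
  have habs : |(∫ t in d..x, g t) + (∫ t in d..x, h t) + c|
      ≤ |∫ t in d..x, g t| + |∫ t in d..x, h t| + |c| := by
    calc _ ≤ |(∫ t in d..x, g t) + (∫ t in d..x, h t)| + |c| := abs_add_le _ _
      _ ≤ _ := by gcongr; exact abs_add_le _ _
  rw [hroot]
  have : norm1 (fun t => b t + Pfun co N₀ 0 * a t) = norm1 h := rfl
  linarith
end

section
/- Let a : [-1,1] → ℝ be continuous, ψ : [-1,1] → [-1,1] continuous, P(x) = Σ_{j=0}^{N₀} a_j x^j a polynomial with real coefficients of degree N₀ ≥ 2, d ∈ [-1,1], c ∈ ℝ, b : [-1,1] → ℝ continuous, and r₀ > 0. Then for all continuous u, v : [-1,1] → ℝ with ‖u‖_{∞,[-1,1]} ≤ r₀ and ‖v‖_{∞,[-1,1]} ≤ r₀, the operator T(f)(x) := ∫_d^x a(t) P(f(ψ(t))) dt + ∫_d^x b(t) dt + c satisfies ‖T(v) − T(u)‖_{∞,[-1,1]} ≤ ‖a‖₁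 · P̲′(r₀) · ‖v − u‖_{∞,[-1,1]}. Moreover, if ‖a‖₁ > 0, ‖a‖₁ P̲′(0) < 1, and 0 < r₀ < θ(P,a), then 0 < ‖a‖₁ P̲′(r₀) < 1, so T is a contraction on the closed ball of radius r₀. -/
open Set

/-- The sup norm of a function on `[-1,1]`: `‖g‖_{∞,[-1,1]} = sup_{t ∈ [-1,1]} |g t|`. -/
noncomputable def supNorm (g : ℝ → ℝ) : ℝ := sSup ((fun x => |g x|) '' Icc (-1:ℝ) 1)

lemma deriv_Pbar_eq (co : ℕ → ℝ) (N₀ : ℕ) (x : ℝ) :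
    deriv (Pbar co N₀) x = ∑ j ∈ Finset.Icc 1 N₀, |co j| * (j * x ^ (j-1)) := by
  have h : HasDerivAt (Pbar co N₀) (∑ j ∈ Finset.Icc 1 N₀, |co j| * (j * x ^ (j-1))) x :=
    HasDerivAt.fun_sum fun j _ => (hasDerivAt_pow j x).const_mul _
  exact h.deriv

lemma pow_sub_pow_abs_le (x y r : ℝ) (hr : 0 ≤ r) (hx : |x| ≤ r) (hy : |y| ≤ r) (n : ℕ) :
    |x ^ n - y ^ n| ≤ n * r ^ (n-1) * |x - y| := by
  rw [← geom_sum₂_mul x y n, abs_mul]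
  gcongr
  calc |∑ i ∈ Finset.range n, x ^ i * y ^ (n - 1 - i)|
      ≤ ∑ i ∈ Finset.range n, |x ^ i * y ^ (n - 1 - i)| := Finset.abs_sum_le_sum_abs _ _
    _ ≤ ∑ i ∈ Finset.range n, r ^ (n-1) := by
        apply Finset.sum_le_sum
        intro i hi
        rw [abs_mul, abs_pow, abs_pow]
        have h1 : |x| ^ i * |y| ^ (n-1-i) ≤ r ^ i * r ^ (n-1-i) :=
          mul_le_mul (pow_le_pow_left₀ (abs_nonneg _) hx _)
            (pow_le_pow_left₀ (abs_nonneg _) hy _) (by positivity) (by positivity)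
        calc |x| ^ i * |y| ^ (n-1-i) ≤ r ^ i * r ^ (n-1-i) := h1
          _ = r ^ (n-1) := by rw [← pow_add]; congr 1; simp at hi; omega
    _ = n * r ^ (n-1) := by rw [Finset.sum_const, Finset.card_range, nsmul_eq_mul]

lemma Pfun_lip (co : ℕ → ℝ) (N₀ : ℕ) (r y z : ℝ) (hr : 0 ≤ r) (hy : |y| ≤ r) (hz : |z| ≤ r) :
    |Pfun co N₀ y - Pfun co N₀ z|
      ≤ (∑ j ∈ Finset.Icc 1 N₀, |co j| * (j * r ^ (j-1))) * |y - z| := by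
  unfold Pfun
  rw [← Finset.sum_sub_distrib]
  have key : ∀ j ∈ Finset.range (N₀+1),
      |co j * y ^ j - co j * z ^ j| ≤ |co j| * (j * r ^ (j-1)) * |y - z| := by
    intro j _
    rw [← mul_sub, abs_mul, mul_assoc]
    exact mul_le_mul_of_nonneg_left (pow_sub_pow_abs_le y z r hr hy hz j) (abs_nonneg _)
  calc |∑ j ∈ Finset.range (N₀+1), (co j * y ^ j - co j * z ^ j)|
      ≤ ∑ j ∈ Finset.range (N₀+1), |co j * y ^ j - co j * z ^ j| :=
        Finset.abs_sum_le_sum_abs _ _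
    _ ≤ ∑ j ∈ Finset.range (N₀+1), |co j| * (j * r ^ (j-1)) * |y - z| :=
        Finset.sum_le_sum key
    _ = (∑ j ∈ Finset.range (N₀+1), |co j| * (j * r ^ (j-1))) * |y - z| := by
        rw [Finset.sum_mul]
    _ = (∑ j ∈ Finset.Icc 1 N₀, |co j| * (j * r ^ (j-1))) * |y - z| := by
        congr 1
        refine (Finset.sum_subset (fun j hj => ?_) (fun j hj hj' => ?_)).symm
        · simp at hj ⊢; omega
        · simp at hj hj'
          have : j = 0 := by omega
          simp [this]

/-- The operator `T(f)(x) = ∫_d^x a(t) P(f(ψ(t))) dt + ∫_d^x b(t) dt + c` satisfies, on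
the closed ball of radius `r₀`, the Lipschitz estimate
`‖T(v) − T(u)‖_∞ ≤ ‖a‖₁ · P̲′(r₀) · ‖v − u‖_∞`; and if moreover `‖a‖₁ > 0`,
`‖a‖₁ P̲′(0) < 1` and `0 < r₀ < θ(P,a)`, then `0 < ‖a‖₁ P̲′(r₀) < 1`, so `T` is a
contraction on that ball. -/
theorem stmt6 (a b ψ : ℝ → ℝ)
    (ha : ContinuousOn a (Icc (-1:ℝ) 1)) (hb : ContinuousOn b (Icc (-1:ℝ) 1))
    (hψ : ContinuousOn ψ (Icc (-1:ℝ) 1))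
    (hψmap : MapsTo ψ (Icc (-1:ℝ) 1) (Icc (-1:ℝ) 1))
    (N₀ : ℕ) (hN₀ : 2 ≤ N₀) (co : ℕ → ℝ) (hlead : co N₀ ≠ 0)
    (d : ℝ) (hd : d ∈ Icc (-1:ℝ) 1) (c : ℝ)
    (r₀ : ℝ) (hr₀ : 0 < r₀)
    (u v : ℝ → ℝ)
    (hu : ContinuousOn u (Icc (-1:ℝ) 1)) (hv : ContinuousOn v (Icc (-1:ℝ) 1))
    (hub : ∀ x ∈ Icc (-1:ℝ) 1, |u x| ≤ r₀) (hvb : ∀ x ∈ Icc (-1:ℝ) 1, |v x| ≤ r₀) :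
    supNorm (fun x =>
        ((∫ t in d..x, a t * Pfun co N₀ (v (ψ t))) + (∫ t in d..x, b t) + c)
        - ((∫ t in d..x, a t * Pfun co N₀ (u (ψ t))) + (∫ t in d..x, b t) + c))
      ≤ norm1 a * deriv (Pbar co N₀) r₀ * supNorm (fun x => v x - u x) ∧
    (0 < norm1 a → norm1 a * deriv (Pbar co N₀) 0 < 1 →
      ∀ θ : ℝ, 0 < θ → norm1 a * deriv (Pbar co N₀) θ = 1 → r₀ < θ →
        0 < norm1 a * deriv (Pbar co N₀) r₀ ∧ norm1 a * deriv (Pbar co N₀) r₀ < 1) := by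
  have hIcc : (-1:ℝ) ≤ 1 := by norm_num
  simp only [deriv_Pbar_eq]
  set D := ∑ j ∈ Finset.Icc 1 N₀, |co j| * (j * r₀ ^ (j-1)) with hDdef
  have hD0 : 0 ≤ D := Finset.sum_nonneg fun j _ => by positivity
  constructor
  · -- Lipschitz estimate
    have hvu : ContinuousOn (fun x => |v x - u x|) (Icc (-1:ℝ) 1) := (hv.sub hu).abs
    have hbdd : BddAbove ((fun x => |v x - u x|) '' Icc (-1:ℝ) 1) :=
      (isCompact_Icc.image_of_continuousOn hvu).bddAbove
    set M := supNorm (fun x => v x - u x) with hMdef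
    have hM : ∀ x ∈ Icc (-1:ℝ) 1, |v x - u x| ≤ M := fun x hx => le_csSup hbdd ⟨x, hx, rfl⟩
    have hM0 : 0 ≤ M := (abs_nonneg _).trans (hM d hd)
    have hPc : Continuous (Pfun co N₀) := by
      unfold Pfun
      exact continuous_finset_sum _ fun j _ => continuous_const.mul (continuous_pow j)
    have hg1 : ContinuousOn (fun t => a t * Pfun co N₀ (v (ψ t))) (Icc (-1:ℝ) 1) :=
      ha.mul (hPc.comp_continuousOn (hv.comp hψ hψmap))
    have hg2 : ContinuousOn (fun t => a t * Pfun co N₀ (u (ψ t))) (Icc (-1:ℝ) 1) :=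
      ha.mul (hPc.comp_continuousOn (hu.comp hψ hψmap))
    set g : ℝ → ℝ := fun t => a t * (Pfun co N₀ (v (ψ t)) - Pfun co N₀ (u (ψ t))) with hgdef
    have hgc : ContinuousOn g (Icc (-1:ℝ) 1) :=
      ha.mul ((hPc.comp_continuousOn (hv.comp hψ hψmap)).sub
        (hPc.comp_continuousOn (hu.comp hψ hψmap)))
    have hgb : ∀ t ∈ Icc (-1:ℝ) 1, |g t| ≤ |a t| * (D * M) := by
      intro t ht
      have hψt := hψmap ht
      rw [hgdef]
      simp only
      rw [abs_mul]
      refine mul_le_mul_of_nonneg_left ?_ (abs_nonneg _)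
      calc |Pfun co N₀ (v (ψ t)) - Pfun co N₀ (u (ψ t))|
          ≤ D * |v (ψ t) - u (ψ t)| :=
            Pfun_lip co N₀ r₀ _ _ hr₀.le (hvb _ hψt) (hub _ hψt)
        _ ≤ D * M := mul_le_mul_of_nonneg_left (hM _ hψt) hD0
    have hfi : IntervalIntegrable (fun t => |g t|) MeasureTheory.volume (-1) 1 :=
      (hgc.abs.mono (uIcc_of_le hIcc).subset).intervalIntegrable
    have hfi2 : IntervalIntegrable (fun t => |a t| * (D * M)) MeasureTheory.volume (-1) 1 :=
      ((ha.abs.mul continuousOn_const).mono (uIcc_of_le hIcc).subset).intervalIntegrable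
    rw [supNorm]
    apply csSup_le (((nonempty_Icc).2 hIcc).image _)
    rintro y ⟨x, hx, rfl⟩
    simp only
    have hsub : uIcc d x ⊆ Icc (-1:ℝ) 1 := uIcc_subset_Icc hd hx
    have h1i : IntervalIntegrable (fun t => a t * Pfun co N₀ (v (ψ t))) MeasureTheory.volume d x :=
      (hg1.mono hsub).intervalIntegrable
    have h2i : IntervalIntegrable (fun t => a t * Pfun co N₀ (u (ψ t))) MeasureTheory.volume d x :=
      (hg2.mono hsub).intervalIntegrable
    have h3 : (∫ t in d..x, g t)
        = (∫ t in d..x, a t * Pfun co N₀ (v (ψ t)))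
          - ∫ t in d..x, a t * Pfun co N₀ (u (ψ t)) := by
      rw [← intervalIntegral.integral_sub h1i h2i]
      apply intervalIntegral.integral_congr
      intro t _
      simp [hgdef, mul_sub]
    have heq : ((∫ t in d..x, a t * Pfun co N₀ (v (ψ t))) + (∫ t in d..x, b t) + c)
        - ((∫ t in d..x, a t * Pfun co N₀ (u (ψ t))) + (∫ t in d..x, b t) + c)
        = ∫ t in d..x, g t := by rw [h3]; ring
    rw [heq]
    have hsubIoc : uIoc d x ⊆ uIoc (-1:ℝ) 1 := by
      rw [uIoc_of_le hIcc]
      intro t ht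
      rcases Set.mem_uIoc.1 ht with ⟨h1, h2⟩ | ⟨h1, h2⟩
      · exact ⟨lt_of_le_of_lt hd.1 h1, h2.trans hx.2⟩
      · exact ⟨lt_of_le_of_lt hx.1 h1, h2.trans hd.2⟩
    calc |∫ t in d..x, g t| ≤ abs (∫ t in d..x, |g t|) := by
          have := intervalIntegral.norm_integral_le_abs_integral_norm
            (μ := MeasureTheory.volume) (a := d) (b := x) (f := g)
          simpa [Real.norm_eq_abs] using this
      _ ≤ abs (∫ t in (-1:ℝ)..1, |g t|) :=
          intervalIntegral.abs_integral_mono_interval hsubIoc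
            (Filter.Eventually.of_forall fun t => abs_nonneg _) hfi
      _ = ∫ t in (-1:ℝ)..1, |g t| :=
          abs_of_nonneg (intervalIntegral.integral_nonneg hIcc fun t _ => abs_nonneg _)
      _ ≤ ∫ t in (-1:ℝ)..1, |a t| * (D * M) :=
          intervalIntegral.integral_mono_on hIcc hfi hfi2 hgb
      _ = (∫ t in (-1:ℝ)..1, |a t|) * (D * M) := intervalIntegral.integral_mul_const _ _
      _ = norm1 a * D * M := by rw [norm1, mul_assoc]
  · -- contraction factor
    intro h1 _h2 θ hθ hθeq hrθ
    have hNmem : N₀ ∈ Finset.Icc 1 N₀ := Finset.mem_Icc.2 ⟨by omega, le_rfl⟩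
    have hlead' : 0 < |co N₀| := abs_pos.2 hlead
    have hN0 : (0:ℝ) < N₀ := by exact_mod_cast (by omega : 0 < N₀)
    have hterm : 0 < |co N₀| * (N₀ * r₀ ^ (N₀-1)) :=
      mul_pos hlead' (mul_pos hN0 (pow_pos hr₀ _))
    have hpos : 0 < D := lt_of_lt_of_le hterm
      (Finset.single_le_sum (f := fun j => |co j| * (j * r₀ ^ (j-1)))
        (fun j _ => by positivity) hNmem)
    have hlt : D < ∑ j ∈ Finset.Icc 1 N₀, |co j| * (j * θ ^ (j-1)) := by
      rw [hDdef]
      apply Finset.sum_lt_sum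
      · intro j _
        refine mul_le_mul_of_nonneg_left ?_ (abs_nonneg _)
        refine mul_le_mul_of_nonneg_left ?_ (Nat.cast_nonneg j)
        exact pow_le_pow_left₀ hr₀.le hrθ.le _
      · refine ⟨N₀, hNmem, ?_⟩
        refine mul_lt_mul_of_pos_left ?_ hlead'
        refine mul_lt_mul_of_pos_left ?_ hN0
        exact pow_lt_pow_left₀ hrθ hr₀.le (by omega)
    refine ⟨mul_pos h1 hpos, ?_⟩
    calc norm1 a * D < norm1 a * ∑ j ∈ Finset.Icc 1 N₀, |co j| * (j * θ ^ (j-1)) :=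
          mul_lt_mul_of_pos_left hlt h1
      _ = 1 := hθeq
end

section
/- Let k > 0, r₀ ≥ 0, N₀ ≥ 2 an integer, Q(x) = Σ_{j=1}^{N₀} c_j x^j with all c_j ≥ 0, and M_a, M_b ≥ 0. Suppose C ≥ 1 satisfies M_a · Q(r₀ + x) + M_b ≤ C · (max(x,1))^{N₀} for all x ≥ 0. For s > 0 define the sequence (ω_{n,s})_{n ≥ 1} by ω_{1,s} := 1 and ω_{n+1,s} := M_a · Q(r₀ + s n^{-1/k} ω_{n,s}) + M_b. Then for every s ∈ (0, 1/C] and every integer n ≥ 1, one has 0 ≤ ω_{n,s} ≤ C. -/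
open Set

/-- Boundedness of the auxiliary recurrent sequence `ω(s)` (estimate (5) of the paper):
if `C ≥ 1` dominates via `M_a Q(r₀+x) + M_b ≤ C (max(x,1))^{N₀}` and `0 < s ≤ 1/C`,
then the sequence defined by `ω₁ = 1`, `ω_{n+1} = M_a Q(r₀ + s n^{-1/k} ω_n) + M_b`
satisfies `0 ≤ ω_n ≤ C` for all `n ≥ 1`. -/
theorem stmt8 (k : ℝ) (hk : 0 < k) (r₀ : ℝ) (hr₀ : 0 ≤ r₀)
    (N₀ : ℕ) (hN₀ : 2 ≤ N₀)
    (cj : ℕ → ℝ) (hcj : ∀ j, 0 ≤ cj j)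
    (Q : ℝ → ℝ) (hQ : ∀ x, Q x = ∑ j ∈ Finset.Icc 1 N₀, cj j * x ^ j)
    (Ma Mb : ℝ) (hMa : 0 ≤ Ma) (hMb : 0 ≤ Mb)
    (C : ℝ) (hC : 1 ≤ C)
    (hCQ : ∀ x : ℝ, 0 ≤ x → Ma * Q (r₀ + x) + Mb ≤ C * (max x 1) ^ N₀)
    (s : ℝ) (hs : 0 < s) (hsC : s ≤ 1 / C)
    (ω : ℕ → ℝ) (hω1 : ω 1 = 1)
    (hωrec : ∀ n : ℕ, 1 ≤ n →
      ω (n+1) = Ma * Q (r₀ + s * (n:ℝ) ^ (-(1:ℝ)/k) * ω n) + Mb) :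
    ∀ n : ℕ, 1 ≤ n → 0 ≤ ω n ∧ ω n ≤ C := by
  have hC0 : (0:ℝ) < C := lt_of_lt_of_le one_pos hC
  intro n hn
  induction n with
  | zero => omega
  | succ m ih =>
    rcases Nat.eq_or_lt_of_le hn with h1 | h1
    · rw [← h1]
      exact ⟨by rw [hω1]; norm_num, by rw [hω1]; linarith⟩
    · have hm : 1 ≤ m := by omega
      obtain ⟨h0, hCm⟩ := ih hm
      set x := s * (m:ℝ) ^ (-(1:ℝ)/k) * ω m with hx
      have hrp0 : 0 ≤ (m:ℝ) ^ (-(1:ℝ)/k) :=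
        Real.rpow_nonneg (Nat.cast_nonneg m) _
      have hrp1 : (m:ℝ) ^ (-(1:ℝ)/k) ≤ 1 := by
        apply Real.rpow_le_one_of_one_le_of_nonpos
        · exact_mod_cast hm
        · have := hk.le
          rw [div_nonpos_iff]
          right; constructor <;> linarith
      have hx0 : 0 ≤ x := by positivity
      have hx1 : x ≤ 1 := by
        have : x ≤ s * 1 * C := by
          apply mul_le_mul (mul_le_mul le_rfl hrp1 hrp0 hs.le) hCm h0
          positivity
        have h2 : s * C ≤ 1 := by
          rw [le_div_iff₀ hC0] at hsC; linarith
        nlinarith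
      have hmax : max x 1 = 1 := max_eq_right hx1
      have := hCQ x hx0
      rw [hmax, one_pow, mul_one] at this
      rw [hωrec m hm]
      constructor
      · have hQ0 : 0 ≤ Q (r₀ + x) := by
          rw [hQ]
          apply Finset.sum_nonneg
          intro j _
          have : 0 ≤ r₀ + x := by linarith
          exact mul_nonneg (hcj j) (pow_nonneg this j)
        have := mul_nonneg hMa hQ0
        linarith
      · exact this
end

section
/- For every A ∈ (0,1) and every integer p ≥ 1, the complex sine function satisfies sin({z ∈ ℂ : dist(z,[-1,1]) < A/(p+1)}) ⊆ {z ∈ ℂ : dist(z,[-1,1]) < A/p}. Consequently, the function sin verifies the E(1) property. -/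
open Set

/-- `φ` verifies the `E(k)` property. -/
def EkProp (k : ℝ) (φ : ℂ → ℂ) : Prop :=
  ∃ τ : ℝ, 0 < τ ∧ ∀ A ∈ Set.Ioc (0:ℝ) τ, ∃ N : ℕ, 1 ≤ N ∧
    ∀ p : ℕ, N ≤ p → φ '' nbhd k A (p+1) ⊆ nbhd k A p

lemma abs_cos_le_cosh (z : ℂ) : ‖Complex.cos z‖ ≤ Real.cosh z.im := by
  rw [show Complex.cos z = (Complex.exp (z*Complex.I) + Complex.exp (-z*Complex.I)) / 2 by rw [← Complex.two_cos]; ring]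
  calc ‖(Complex.exp (z*Complex.I) + Complex.exp (-z*Complex.I)) / 2‖
      ≤ (‖Complex.exp (z*Complex.I)‖ +
         ‖Complex.exp (-z*Complex.I)‖) / 2 := by
        rw [norm_div]
        simp only [Complex.norm_two]
        gcongr
        exact norm_add_le _ _
    _ = (Real.exp (-z.im) + Real.exp z.im) / 2 := by
        rw [Complex.norm_exp, Complex.norm_exp]
        simp [Complex.mul_I_re]
    _ = Real.cosh z.im := by rw [Real.cosh_eq]; ring

lemma seg_compact : IsCompact seg := (isCompact_Icc).image Complex.continuous_ofReal

lemma seg_nonempty : seg.Nonempty := ⟨0, ⟨0, by norm_num, by simp⟩⟩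

lemma sin_mem_seg (t : ℝ) (_ht : t ∈ Icc (-1:ℝ) 1) : Complex.sin t ∈ seg := by
  rw [← Complex.ofReal_sin]
  exact ⟨Real.sin t, ⟨Real.neg_one_le_sin t, Real.sin_le_one t⟩, rfl⟩

lemma main_incl {A : ℝ} (hA0 : 0 < A) (hA1 : A < 1) {p : ℕ} (hp : 1 ≤ p) :
    Complex.sin '' {z : ℂ | Metric.infDist z seg < A / (p+1)}
      ⊆ {z : ℂ | Metric.infDist z seg < A / p} := by
  rintro y ⟨z, hz, rfl⟩
  simp only [mem_setOf_eq] at hz ⊢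
  have hP : (1:ℝ) ≤ (p:ℝ) := by exact_mod_cast hp
  set r : ℝ := A / (p+1) with hr
  have hr0 : 0 < r := by positivity
  have hr1 : r < 1 / ((p:ℝ)+1) := by
    rw [hr, div_lt_div_iff₀ (by positivity) (by positivity)]
    nlinarith
  -- closest point
  obtain ⟨w, hw, hdw⟩ := seg_compact.exists_infDist_eq_dist seg_nonempty z
  obtain ⟨t, ht, rfl⟩ := hw
  have hzw : dist z (t:ℂ) < r := by rw [← hdw]; exact hz
  -- the strip
  set S : Set ℂ := {ζ : ℂ | |ζ.im| ≤ r} with hS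
  have hconv : Convex ℝ S := by
    have : S = Complex.imLm ⁻¹' (Icc (-r) r) := by
      ext ζ; simp [hS, abs_le, Complex.imLm]
    rw [this]
    exact (convex_Icc (-r) r).linear_preimage _
  have hzS : z ∈ S := by
    have : |z.im| ≤ ‖z - t‖ := by
      have := Complex.abs_im_le_norm (z - t)
      simpa using this
    have h2 : ‖z - t‖ = dist z (t:ℂ) := (dist_eq_norm z t).symm
    simp only [hS, mem_setOf_eq]
    rw [h2] at this
    exact this.trans hzw.le
  have htS : (t:ℂ) ∈ S := by simp [hS, hr0.le]
  -- derivative bound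
  have hbound : ∀ ζ ∈ S, ‖fderiv ℂ Complex.sin ζ‖ ≤ Real.cosh r := by
    intro ζ hζ
    rw [(Complex.hasDerivAt_sin ζ).hasFDerivAt.fderiv]
    rw [ContinuousLinearMap.norm_toSpanSingleton]
    calc ‖Complex.cos ζ‖ ≤ Real.cosh ζ.im := abs_cos_le_cosh ζ
      _ ≤ Real.cosh r := by
          rw [Real.cosh_le_cosh]
          rw [abs_of_pos hr0]
          exact hζ
  have hmvt : ‖Complex.sin z - Complex.sin t‖ ≤ Real.cosh r * ‖z - (t:ℂ)‖ :=
    hconv.norm_image_sub_le_of_norm_fderiv_le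
      (fun x _ => Complex.differentiable_sin x) hbound htS hzS
  -- cosh bound
  have hcosh : Real.cosh r ≤ ((p:ℝ)+1)/((p:ℝ)) := by
    have h1 : Real.cosh r ≤ Real.exp (r^2/2) := Real.cosh_le_exp_half_sq r
    have hrlt1 : r < 1 := lt_of_lt_of_le hr1 (by rw [div_le_one (by positivity)]; linarith)
    have hr2 : r^2 < r := by nlinarith
    have hx : r^2/2 < 1/((p:ℝ)+1) := by linarith
    have hx1 : r^2/2 < 1 := by
      have : (1:ℝ)/((p:ℝ)+1) ≤ 1 := by rw [div_le_one (by linarith)]; linarith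
      linarith
    have h2 : Real.exp (r^2/2) ≤ (1 - r^2/2)⁻¹ := by
      have h3 := Real.add_one_le_exp (-(r^2/2))
      have h4 : (0:ℝ) < 1 - r^2/2 := by linarith
      rw [Real.exp_neg] at h3
      rw [← one_div, le_div_iff₀ h4]
      calc Real.exp (r^2/2) * (1 - r^2/2) ≤ Real.exp (r^2/2) * (Real.exp (r^2/2))⁻¹ := by
            apply mul_le_mul_of_nonneg_left _ (Real.exp_pos _).le
            linarith
        _ = 1 := mul_inv_cancel₀ (Real.exp_pos _).ne'
    have h5 : (1 - r^2/2)⁻¹ ≤ ((p:ℝ)+1)/((p:ℝ)) := by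
      rw [inv_le_iff_one_le_mul₀ (by nlinarith)]
      rw [div_mul_eq_mul_div, le_div_iff₀ (by linarith)]
      have hinv : ((p:ℝ)+1) * (1/((p:ℝ)+1)) = 1 := by field_simp
      nlinarith [mul_lt_mul_of_pos_left hx (show (0:ℝ) < (p:ℝ)+1 by linarith)]
    linarith
  -- finish
  have hmem : Complex.sin t ∈ seg := sin_mem_seg t ht
  calc Metric.infDist (Complex.sin z) seg ≤ dist (Complex.sin z) (Complex.sin t) :=
        Metric.infDist_le_dist_of_mem hmem
    _ = ‖Complex.sin z - Complex.sin t‖ := dist_eq_norm _ _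
    _ ≤ Real.cosh r * ‖z - (t:ℂ)‖ := hmvt
    _ < Real.cosh r * r := by
        apply mul_lt_mul_of_pos_left _ (Real.cosh_pos r)
        rw [← dist_eq_norm]; exact hzw
    _ ≤ (((p:ℝ)+1)/((p:ℝ))) * r := by
        apply mul_le_mul_of_nonneg_right hcosh hr0.le
    _ = A / p := by
        rw [hr]; field_simp

/-- For every `A ∈ (0,1)` and integer `p ≥ 1`,
`sin({z : dist(z,[-1,1]) < A/(p+1)}) ⊆ {z : dist(z,[-1,1]) < A/p}`; consequently the
complex sine function verifies the `E(1)` property. -/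
theorem stmt11 :
    (∀ A : ℝ, A ∈ Set.Ioo (0:ℝ) 1 → ∀ p : ℕ, 1 ≤ p →
      Complex.sin '' {z : ℂ | Metric.infDist z seg < A / (p+1)}
        ⊆ {z : ℂ | Metric.infDist z seg < A / p}) ∧
    EkProp 1 Complex.sin := by
  constructor
  · intro A hA p hp
    exact main_incl hA.1 hA.2 hp
  · refine ⟨1/2, by norm_num, fun A hA => ⟨1, le_refl 1, fun p hp => ?_⟩⟩
    have hnb : ∀ n : ℕ, nbhd 1 A n = {z : ℂ | Metric.infDist z seg < A / n} := by
      intro n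
      unfold nbhd
      ext z
      rw [show (-(1:ℝ)/1) = (-1 : ℝ) by norm_num, Real.rpow_neg_one, ← div_eq_mul_inv]
    rw [hnb, hnb]
    have : ((p:ℝ)+1) = ((p+1 : ℕ) : ℝ) := by push_cast; ring
    have h := main_incl hA.1 (lt_of_le_of_lt hA.2 (by norm_num)) hp
    rw [this] at h
    exact h
end
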